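/- Let G be a finite simple graph on vertex set V and let v be any vertex. Then there exists a press vector x : V → ZMod 2 with x v = 0 such that for every vertex u ≠ v, the effect x u + ∑_{w ∈ N(u)} x w equals 1; that is, using presses only at vertices other than v, one can toggle every vertex different from v an odd number of times. -/

import Mathlib

open Matrix Finset

lemma dot_self_mulVec_char2 {n : Type*} [Fintype n] [DecidableEq n]
    (M : Matrix n n (ZMod 2)) (hsymm : Mᵀ = M)
    (y : n → ZMod 2) : y ⬝ᵥ (M *ᵥ y) = ∑ i, M i i * y i := by
  have hexp : y ⬝ᵥ (M *ᵥ y) = ∑ p ∈ univ ×ˢ (univ : Finset n), y p.1 * (M p.1 p.2 * y p.2) := by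
    rw [Finset.sum_product]
    simp only [dotProduct, Matrix.mulVec, Finset.mul_sum]
  rw [hexp, ← Finset.diag_union_offDiag, Finset.sum_union (Finset.disjoint_diag_offDiag _)]
  have hdiag : ∑ p ∈ (univ : Finset n).diag, y p.1 * (M p.1 p.2 * y p.2) = ∑ i, M i i * y i := by
    rw [Finset.sum_diag]
    refine Finset.sum_congr rfl fun i _ => ?_
    have h2 : ∀ a : ZMod 2, a * a = a := by decide
    calc y i * (M i i * y i) = M i i * (y i * y i) := by ring
    _ = M i i * y i := by rw [h2]
  have hoff : ∑ p ∈ (univ : Finset n).offDiag, y p.1 * (M p.1 p.2 * y p.2) = 0 := by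
    refine Finset.sum_involution (fun p _ => p.swap) ?_ ?_ ?_ ?_
    · intro p hp
      have hM : M p.2 p.1 = M p.1 p.2 := by
        calc M p.2 p.1 = Mᵀ p.1 p.2 := rfl
        _ = M p.1 p.2 := by rw [hsymm]
      simp only [Prod.fst_swap, Prod.snd_swap, hM]
      have : ∀ a : ZMod 2, a + a = 0 := by decide
      calc y p.1 * (M p.1 p.2 * y p.2) + y p.2 * (M p.1 p.2 * y p.1)
          = y p.1 * (M p.1 p.2 * y p.2) + y p.1 * (M p.1 p.2 * y p.2) := by ring
      _ = 0 := this _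
    · intro p hp _
      intro h
      have h1 : p.1 = p.2 := by
        have := congrArg Prod.fst h
        simpa [Prod.fst_swap] using this.symm
      exact (Finset.mem_offDiag.mp hp).2.2 h1
    · intro p hp
      rcases Finset.mem_offDiag.mp hp with ⟨h1, h2, h3⟩
      exact Finset.mem_offDiag.mpr ⟨by simp, by simp, by simpa using Ne.symm h3⟩
    · intro p hp; simp
  rw [hdiag, hoff, add_zero]

lemma sutner {n : Type*} [Fintype n] [DecidableEq n] (M : Matrix n n (ZMod 2))
    (hsymm : Mᵀ = M) (hdiag : ∀ i, M i i = 1) :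
    ∃ x : n → ZMod 2, M *ᵥ x = 1 := by
  classical
  set f : (n → ZMod 2) →ₗ[ZMod 2] (n → ZMod 2) := M.mulVecLin with hf
  set K := LinearMap.ker f with hK
  let φ : (n → ZMod 2) →ₗ[ZMod 2] Module.Dual (ZMod 2) (n → ZMod 2) :=
    Matrix.toLinearMap₂' (ZMod 2) (1 : Matrix n n (ZMod 2))
  have hφapp : ∀ y x : n → ZMod 2, φ y x = y ⬝ᵥ x := by
    intro y x
    rw [show φ y x = Matrix.toLinearMap₂' (ZMod 2) (1 : Matrix n n (ZMod 2)) y x from rfl,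
      Matrix.toLinearMap₂'_apply', Matrix.one_mulVec]
  have hinj : Function.Injective φ := by
    rw [← LinearMap.ker_eq_bot, LinearMap.ker_eq_bot']
    intro y hy
    funext i
    have := congrFun (congrArg DFunLike.coe hy) (Pi.single i 1)
    rw [hφapp] at this
    simpa [dotProduct_single] using this
  have hsurj : Function.Surjective φ :=
    (LinearMap.injective_iff_surjective_of_finrank_eq_finrank
      (Subspace.dual_finrank_eq (K := ZMod 2) (V := n → ZMod 2)).symm).mp hinj
  let φe : (n → ZMod 2) ≃ₗ[ZMod 2] Module.Dual (ZMod 2) (n → ZMod 2) :=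
    LinearEquiv.ofBijective φ ⟨hinj, hsurj⟩
  set Φ : Subspace (ZMod 2) (Module.Dual (ZMod 2) (n → ZMod 2)) := K.map φ with hΦ
  set S := Φ.dualCoannihilator with hS
  have hrange_le : LinearMap.range f ≤ S := by
    rintro x ⟨z, rfl⟩
    rw [hS, Submodule.mem_dualCoannihilator]
    rintro ψ hψ
    rw [hΦ] at hψ
    obtain ⟨y, hy, rfl⟩ := Submodule.mem_map.mp hψ
    rw [hφapp]
    have hzero : f z = M *ᵥ z := rfl
    rw [hzero, Matrix.dotProduct_mulVec]
    have hyK : M *ᵥ y = 0 := hy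
    have : y ᵥ* M = 0 := by
      rw [← hsymm, ← Matrix.mulVec_transpose, Matrix.transpose_transpose, hyK]
    rw [this, zero_dotProduct]
  have hdim1 : Module.finrank (ZMod 2) Φ = Module.finrank (ZMod 2) K := by
    have : Φ = K.map (φe : (n → ZMod 2) →ₗ[ZMod 2] _) := rfl
    rw [this, LinearEquiv.finrank_map_eq]
  have hdim2 : Module.finrank (ZMod 2) Φ + Module.finrank (ZMod 2) S
      = Module.finrank (ZMod 2) (n → ZMod 2) :=
    Subspace.finrank_add_finrank_dualCoannihilator_eq Φ
  have hdim3 : Module.finrank (ZMod 2) (LinearMap.range f) + Module.finrank (ZMod 2) K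
      = Module.finrank (ZMod 2) (n → ZMod 2) := LinearMap.finrank_range_add_finrank_ker f
  have heq : LinearMap.range f = S := by
    apply Submodule.eq_of_le_of_finrank_le hrange_le
    omega
  have hone : (1 : n → ZMod 2) ∈ S := by
    rw [hS, Submodule.mem_dualCoannihilator]
    rintro ψ hψ
    obtain ⟨y, hy, rfl⟩ := Submodule.mem_map.mp hψ
    rw [hφapp]
    have hyK : M *ᵥ y = 0 := hy
    have h1 : y ⬝ᵥ (1 : n → ZMod 2) = ∑ i, M i i * y i := by
      simp [dotProduct, hdiag]
    rw [h1, ← dot_self_mulVec_char2 M hsymm y, hyK, dotProduct_zero]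
  rw [← heq] at hone
  obtain ⟨x, hx⟩ := hone
  exact ⟨x, hx⟩

theorem lights_out_avoid_vertex {V : Type*} [Fintype V] (G : SimpleGraph V)
    [DecidableRel G.Adj] (v : V) :
    ∃ x : V → ZMod 2, x v = 0 ∧ ∀ u : V, u ≠ v →
      x u + ∑ w ∈ G.neighborFinset u, x w = 1 := by
  classical
  let M : Matrix {u : V // u ≠ v} {u : V // u ≠ v} (ZMod 2) :=
    fun i j => if i = j ∨ G.Adj i.1 j.1 then 1 else 0
  have hsymm : Mᵀ = M := by
    ext i j
    simp only [Matrix.transpose_apply]; simp only [M]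
    congr 1
    simp only [eq_iff_iff]
    constructor
    · rintro (h | h)
      · exact Or.inl h.symm
      · exact Or.inr h.symm
    · rintro (h | h)
      · exact Or.inl h.symm
      · exact Or.inr h.symm
  have hdiag : ∀ i, M i i = 1 := fun i => by simp [M]
  obtain ⟨x', hx'⟩ := sutner M hsymm hdiag
  set x : V → ZMod 2 := fun u => if h : u = v then 0 else x' ⟨u, h⟩ with hxdef
  have hxv : x v = 0 := by simp [hxdef]
  refine ⟨x, hxv, ?_⟩
  intro u hu
  have h1 := congrFun hx' ⟨u, hu⟩
  have hxu : x u = x' ⟨u, hu⟩ := by simp [hxdef, hu]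
  have hxj : ∀ j : {u : V // u ≠ v}, x j.1 = x' j := by
    intro j
    simp [hxdef, j.2]
  -- compute (M *ᵥ x') ⟨u, hu⟩
  have hmv : (M *ᵥ x') ⟨u, hu⟩
      = x' ⟨u, hu⟩ + ∑ j : {w : V // w ≠ v}, if G.Adj u j.1 then x' j else 0 := by
    have : (M *ᵥ x') ⟨u, hu⟩ = ∑ j : {w : V // w ≠ v},
        ((if (⟨u, hu⟩ : {w : V // w ≠ v}) = j then x' j else 0)
          + (if G.Adj u j.1 then x' j else 0)) := by
      simp only [Matrix.mulVec, dotProduct, M]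
      refine Finset.sum_congr rfl fun j _ => ?_
      by_cases h : (⟨u, hu⟩ : {w : V // w ≠ v}) = j
      · have hnadj : ¬ G.Adj u j.1 := by
          subst h; exact G.irrefl
        simp [h, hnadj]
      · by_cases h2 : G.Adj u j.1
        · simp [h, h2]
        · simp [h, h2]
    rw [this, Finset.sum_add_distrib, Finset.sum_ite_eq (Finset.univ) (⟨u, hu⟩ : {w : V // w ≠ v})]
    simp
  -- relate subtype sum with neighborFinset sum
  have hsum : ∑ j : {w : V // w ≠ v}, (if G.Adj u j.1 then x' j else 0)
      = ∑ w ∈ G.neighborFinset u, x w := by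
    have step1 : ∑ j : {w : V // w ≠ v}, (if G.Adj u j.1 then x' j else 0)
        = ∑ j : {w : V // w ≠ v}, (if G.Adj u j.1 then x j.1 else 0) := by
      refine Finset.sum_congr rfl fun j _ => ?_
      rw [hxj]
    have step2 : ∑ j : {w : V // w ≠ v}, (if G.Adj u j.1 then x j.1 else 0)
        = ∑ w ∈ Finset.univ.filter (· ≠ v), (if G.Adj u w then x w else 0) := by
      exact (Finset.sum_subtype (Finset.univ.filter (· ≠ v))
        (fun w => by simp) (fun w => if G.Adj u w then x w else 0)).symm
    have step3 : ∑ w ∈ Finset.univ.filter (· ≠ v), (if G.Adj u w then x w else 0)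
        = ∑ w : V, (if G.Adj u w then x w else 0) := by
      rw [Finset.sum_filter_of_ne]
      intro w _ hw
      intro hwv
      subst hwv
      rw [hxv] at hw
      simp at hw
    have step4 : ∑ w : V, (if G.Adj u w then x w else 0) = ∑ w ∈ G.neighborFinset u, x w := by
      rw [SimpleGraph.neighborFinset_eq_filter, Finset.sum_filter]
    rw [step1, step2, step3, step4]
  rw [hxu, ← hsum, ← hmv, hx']
  rfl
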